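/- The norm of the dual ℛ* of Read's space is 2/3-rough: for every x* in the unit sphere of ℛ* , limsup_{‖h‖→0} (‖x* + h‖ + ‖x* − h‖ − 2‖x*‖)/‖h‖ ≥ 2/3. -/

import Mathlib

set_option maxHeartbeats 1000000


open Filter Topology NormedSpace

/-- The sup norm of a real sequence. -/
noncomputable def supNorm (x : ℕ → ℝ) : ℝ := ⨆ k, |x k|

/-- The duality pairing `⟨x, v⟩ = ∑ₖ x k * v k`. -/
noncomputable def pairing (x v : ℕ → ℝ) : ℝ := ∑' k, x k * v k

/-- Read's norm `|||x||| = ‖x‖_∞ + ∑ₙ rₙ |⟨x, vₙ⟩|`. -/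
noncomputable def readNorm (r : ℕ → ℝ) (v : ℕ → ℕ → ℝ) (x : ℕ → ℝ) : ℝ :=
  supNorm x + ∑' n, r n * |pairing x (v n)|

/-- The norm of the dual `ℛ*` of Read's space is `2/3`-rough: for every `x*` in the
unit sphere of `ℛ*`,
`limsup_{‖h‖→0} (‖x* + h‖ + ‖x* − h‖ − 2‖x*‖)/‖h‖ ≥ 2/3`.
Here Read's space is presented as a normed space `X` linearly isometric, via `e`,
to `c₀` equipped with the norm `|||·|||`, and the limsup inequality is unfolded. -/
theorem read_dual_norm_rough
    (r : ℕ → ℝ) (hrpos : ∀ n, 0 < r n) (hrsum : Summable r) (hr2 : ∑' n, r n ≤ 2)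
    (v : ℕ → ℕ → ℝ) (hv1 : ∀ n, Summable fun k => |v n k|)
    (hv2 : ∀ n, ∑' k, |v n k| = 1)
    (hdense : ∀ w : ℕ → ℝ, (Summable fun k => |w k|) → ∑' k, |w k| = 1 →
      ∀ ε > 0, ∃ n, ∑' k, |w k - v n k| < ε)
    (X : Type*) [NormedAddCommGroup X] [NormedSpace ℝ X]
    (e : X →ₗ[ℝ] (ℕ → ℝ)) (hinj : Function.Injective e)
    (hc0 : ∀ x, Tendsto (e x) atTop (𝓝 0))
    (hsurj : ∀ f : ℕ → ℝ, Tendsto f atTop (𝓝 0) → ∃ x, e x = f)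
    (hnorm : ∀ x, ‖x‖ = readNorm r v (e x))
    (f : StrongDual ℝ X) (hf : ‖f‖ = 1) :
    ∀ ε > 0, ∀ δ > 0, ∃ h : StrongDual ℝ X, 0 < ‖h‖ ∧ ‖h‖ < δ ∧
      (‖f + h‖ + ‖f - h‖ - 2 * ‖f‖) / ‖h‖ > 2 / 3 - ε := by
  -- basic facts
  have hvk : ∀ n k, |v n k| ≤ 1 := fun n k =>
    (hv2 n) ▸ Summable.le_tsum (hv1 n) k fun j _ => abs_nonneg _
  have hbddX : ∀ x : X, BddAbove (Set.range fun k => |e x k|) := by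
    intro x
    have h := (hc0 x).abs
    rw [abs_zero] at h
    exact h.bddAbove_range
  have hsupX_le : ∀ (x : X) (k : ℕ), |e x k| ≤ supNorm (e x) := fun x k =>
    le_ciSup (hbddX x) k
  have hsup0 : ∀ x : X, 0 ≤ supNorm (e x) := fun x =>
    le_trans (abs_nonneg _) (hsupX_le x 0)
  -- pairing bound
  have pair_sum_abs : ∀ (y : ℕ → ℝ) (M : ℝ), (∀ k, |y k| ≤ M) → ∀ n,
      Summable fun k => |y k * v n k| := by
    intro y M hy n
    refine Summable.of_nonneg_of_le (fun k => abs_nonneg _) (fun k => ?_) ((hv1 n).mul_left M)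
    rw [abs_mul]
    exact mul_le_mul_of_nonneg_right (hy k) (abs_nonneg _)
  have pair_sum : ∀ (y : ℕ → ℝ) (M : ℝ), (∀ k, |y k| ≤ M) → ∀ n,
      Summable fun k => y k * v n k := fun y M hy n =>
    (pair_sum_abs y M hy n).of_abs
  have pair_abs : ∀ (y : ℕ → ℝ) (M : ℝ), (∀ k, |y k| ≤ M) → ∀ n,
      |pairing y (v n)| ≤ M := by
    intro y M hy n
    have h1 : ∀ k, |y k * v n k| ≤ M * |v n k| := fun k => by
      rw [abs_mul]; exact mul_le_mul_of_nonneg_right (hy k) (abs_nonneg _)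
    have hns : Summable fun k => ‖y k * v n k‖ := by
      simpa only [Real.norm_eq_abs] using pair_sum_abs y M hy n
    calc |pairing y (v n)| ≤ ∑' k, |y k * v n k| := by
          simpa only [Real.norm_eq_abs, pairing] using norm_tsum_le_tsum_norm hns
      _ ≤ ∑' k, M * |v n k| :=
          Summable.tsum_le_tsum h1 (pair_sum_abs y M hy n) ((hv1 n).mul_left M)
      _ = M * ∑' k, |v n k| := tsum_mul_left
      _ = M := by rw [hv2 n, mul_one]
  have Psummable : ∀ (y : ℕ → ℝ) (M : ℝ), (∀ k, |y k| ≤ M) →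
      Summable fun n => r n * |pairing y (v n)| := by
    intro y M hy
    refine Summable.of_nonneg_of_le (fun n => mul_nonneg (hrpos n).le (abs_nonneg _))
      (fun n => mul_le_mul_of_nonneg_left (pair_abs y M hy n) (hrpos n).le)
      (hrsum.mul_right M)
  have Pnonneg : ∀ y : ℕ → ℝ, 0 ≤ ∑' n, r n * |pairing y (v n)| := fun y =>
    tsum_nonneg fun n => mul_nonneg (hrpos n).le (abs_nonneg _)
  have norm_ge_sup : ∀ x : X, supNorm (e x) ≤ ‖x‖ := by
    intro x
    rw [hnorm, readNorm]
    linarith [Pnonneg (e x)]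
  have norm_le_3sup : ∀ x : X, ‖x‖ ≤ 3 * supNorm (e x) := by
    intro x
    have hS0 := hsup0 x
    have h1 : ∑' n, r n * |pairing (e x) (v n)| ≤ ∑' n, r n * supNorm (e x) :=
      Summable.tsum_le_tsum
        (fun n => mul_le_mul_of_nonneg_left (pair_abs _ _ (hsupX_le x) n) (hrpos n).le)
        (Psummable _ _ (hsupX_le x)) (hrsum.mul_right _)
    have h2 : ∑' n, r n * supNorm (e x) = (∑' n, r n) * supNorm (e x) := tsum_mul_right
    rw [hnorm, readNorm]
    nlinarith [hr2]
  -- domination: `τ k → 0`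
  have hτ : Tendsto (fun k => ∑' n, r n * |v n k|) atTop (𝓝 0) := by
    have h0 : (0 : ℝ) = ∑' n : ℕ, (0 : ℝ) := by simp
    rw [h0]
    refine tendsto_tsum_of_dominated_convergence (f := fun k n => r n * |v n k|)
      (g := fun _ => (0 : ℝ)) (bound := r) hrsum (fun n => ?_) ?_
    · have h1 : Tendsto (fun k => |v n k|) atTop (𝓝 0) := (hv1 n).tendsto_atTop_zero
      simpa using h1.const_mul (r n)
    · filter_upwards with k n
      rw [Real.norm_eq_abs, abs_of_nonneg (mul_nonneg (hrpos n).le (abs_nonneg _))]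
      calc r n * |v n k| ≤ r n * 1 := mul_le_mul_of_nonneg_left (hvk n k) (hrpos n).le
        _ = r n := mul_one _
  -- main proof
  intro ε hε δ hδ
  have ht : (0 : ℝ) < δ / 2 := by linarith
  have hmin : (0 : ℝ) < min δ 1 := lt_min hδ one_pos
  set η : ℝ := ε / 48 * min δ 1 with hηdef
  have hη0 : 0 < η := mul_pos (by linarith) hmin
  have hηδ : η ≤ ε * δ / 48 := by
    have h1 : min δ 1 ≤ δ := min_le_left _ _
    have := mul_le_mul_of_nonneg_left h1 (le_of_lt (show (0:ℝ) < ε / 48 by linarith))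
    nlinarith
  have hηε : η ≤ ε / 48 := by
    have h1 : min δ 1 ≤ 1 := min_le_right _ _
    nlinarith
  -- pick a near-norming point
  have h1 : (1 - η : ℝ) < ‖f‖ := by rw [hf]; linarith
  obtain ⟨x₀, hx₀, hfx₀⟩ := f.exists_lt_apply_of_lt_opNorm h1
  obtain ⟨x, hx1, hfx⟩ : ∃ x : X, ‖x‖ ≤ 1 ∧ 1 - η < f x := by
    rw [Real.norm_eq_abs] at hfx₀
    rcases le_or_gt 0 (f x₀) with hc | hc
    · exact ⟨x₀, hx₀.le, by rwa [abs_of_nonneg hc] at hfx₀⟩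
    · refine ⟨-x₀, by rw [norm_neg]; exact hx₀.le, ?_⟩
      rw [map_neg]
      rwa [abs_of_neg hc] at hfx₀
  have hxn : 1 - η < ‖x‖ := by
    have h2 : f x ≤ ‖f‖ * ‖x‖ := le_trans (le_abs_self _)
      (by simpa [Real.norm_eq_abs] using f.le_opNorm x)
    rw [hf, one_mul] at h2
    linarith
  have hS : (1 - η) / 3 < supNorm (e x) := by
    have := norm_le_3sup x
    linarith
  -- pick a far coordinate
  obtain ⟨k, hk1, hk2⟩ : ∃ k, |e x k| < η ∧ (∑' n, r n * |v n k|) < η := by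
    have ha : ∀ᶠ k in atTop, |e x k| < η := by
      have h := (hc0 x).abs
      rw [abs_zero] at h
      exact h.eventually_lt_const hη0
    have hb : ∀ᶠ k in atTop, (∑' n, r n * |v n k|) < η := hτ.eventually_lt_const hη0
    exact (ha.and hb).exists
  -- the perturbation direction
  have hsingle : Tendsto (Pi.single k (1 : ℝ) : ℕ → ℝ) atTop (𝓝 0) := by
    refine tendsto_const_nhds.congr' ?_
    filter_upwards [eventually_ge_atTop (k + 1)] with j hj
    have : j ≠ k := by omega
    simp [Pi.single_apply, this]
  obtain ⟨w, hw⟩ := hsurj _ hsingle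
  have hw_norm : 1 ≤ ‖w‖ := by
    have h2 := hsupX_le w k
    have h3 := norm_ge_sup w
    rw [hw, Pi.single_eq_same, abs_one] at h2
    rw [hw] at h3
    exact le_trans h2 h3
  -- norm bound on the perturbed points
  have hub : ∀ c : ℝ, |c| = 1 / 3 → ‖x + c • w‖ ≤ 1 + 2 * η := by
    intro c hc
    have hew : ∀ j, e (x + c • w) j = e x j + c * (Pi.single k (1:ℝ) : ℕ → ℝ) j := by
      intro j
      rw [map_add, map_smul, hw]
      rfl
    have hbnd : ∀ j, |e (x + c • w) j| ≤ supNorm (e x) + (η + η / 3) := by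
      intro j
      rw [hew j]
      rcases eq_or_ne j k with rfl | hj
      · simp only [Pi.single_eq_same, mul_one]
        calc |e x j + c| ≤ |e x j| + |c| := abs_add_le _ _
          _ ≤ supNorm (e x) + (η + η / 3) := by rw [hc]; linarith [hk1, hS]
      · rw [Pi.single_eq_of_ne hj, mul_zero, add_zero]
        linarith [hsupX_le x j, hη0]
    have hsupb : supNorm (e (x + c • w)) ≤ supNorm (e x) + (η + η / 3) := ciSup_le hbnd
    -- pairing part
    have hpairw : ∀ n, pairing (e (x + c • w)) (v n) = pairing (e x) (v n) + c * v n k := by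
      intro n
      have hs1 : Summable fun j => e x j * v n j := pair_sum _ _ (hsupX_le x) n
      have hs2 : Summable fun j => (c * (Pi.single k (1:ℝ) : ℕ → ℝ) j) * v n j := by
        apply summable_of_ne_finset_zero (s := {k})
        intro j hj
        rw [Finset.mem_singleton] at hj
        simp [Pi.single_eq_of_ne hj]
      have heq : (fun j => e (x + c • w) j * v n j)
          = fun j => e x j * v n j + (c * (Pi.single k (1:ℝ) : ℕ → ℝ) j) * v n j := by
        funext j
        rw [hew j]; ring
      rw [pairing, heq, Summable.tsum_add hs1 hs2, ← pairing]
      congr 1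
      rw [tsum_eq_single k]
      · simp
      · intro j hj
        simp [Pi.single_eq_of_ne hj]
    have hpa : ∀ n, |pairing (e (x + c • w)) (v n)|
        ≤ |pairing (e x) (v n)| + 1 / 3 * |v n k| := by
      intro n
      rw [hpairw n]
      calc |pairing (e x) (v n) + c * v n k|
          ≤ |pairing (e x) (v n)| + |c * v n k| := abs_add_le _ _
        _ = |pairing (e x) (v n)| + 1 / 3 * |v n k| := by rw [abs_mul, hc]
    have hsum1 : Summable fun n => r n * |pairing (e x) (v n)| :=
      Psummable _ _ (hsupX_le x)
    have hsum2 : Summable fun n => r n * (1 / 3 * |v n k|) := by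
      refine Summable.of_nonneg_of_le
        (fun n => mul_nonneg (hrpos n).le (mul_nonneg (by norm_num) (abs_nonneg _)))
        (fun n => ?_) (hrsum.mul_right (1 / 3))
      have : 1 / 3 * |v n k| ≤ 1 / 3 * 1 :=
        mul_le_mul_of_nonneg_left (hvk n k) (by norm_num)
      nlinarith [(hrpos n).le]
    have hP : ∑' n, r n * |pairing (e (x + c • w)) (v n)|
        ≤ ∑' n, r n * |pairing (e x) (v n)| + 1 / 3 * ∑' n, r n * |v n k| := by
      calc ∑' n, r n * |pairing (e (x + c • w)) (v n)|
          ≤ ∑' n, (r n * |pairing (e x) (v n)| + r n * (1 / 3 * |v n k|)) := by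
            refine Summable.tsum_le_tsum (fun n => ?_) (Psummable _ _ (hsupX_le (x + c • w)))
              (hsum1.add hsum2)
            have := hpa n
            nlinarith [(hrpos n).le]
        _ = ∑' n, r n * |pairing (e x) (v n)| + ∑' n, r n * (1 / 3 * |v n k|) :=
            Summable.tsum_add hsum1 hsum2
        _ = ∑' n, r n * |pairing (e x) (v n)| + 1 / 3 * ∑' n, r n * |v n k| := by
            congr 1
            rw [← tsum_mul_left]
            congr 1
            funext n
            ring
    have hx_decomp : supNorm (e x) + ∑' n, r n * |pairing (e x) (v n)| ≤ 1 := by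
      rw [← readNorm, ← hnorm]; exact hx1
    rw [hnorm, readNorm]
    have hτk : 1 / 3 * ∑' n, r n * |v n k| ≤ 1 / 3 * η :=
      mul_le_mul_of_nonneg_left hk2.le (by norm_num)
    linarith [hsupb, hP]
  -- assemble the two slice points
  set C : ℝ := 1 + 2 * η with hCdef
  have hC0 : (0 : ℝ) < C := by linarith
  have hC1 : (1 : ℝ) ≤ C := by linarith
  have hu1 : ‖x + (3⁻¹ : ℝ) • w‖ ≤ C := hub 3⁻¹ (by norm_num)
  have hu2 : ‖x + (-3⁻¹ : ℝ) • w‖ ≤ C := hub (-3⁻¹) (by rw [abs_neg]; norm_num)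
  set y₁ : X := C⁻¹ • (x + (3⁻¹ : ℝ) • w) with hy₁def
  set y₂ : X := C⁻¹ • (x + (-3⁻¹ : ℝ) • w) with hy₂def
  have hCinv : 0 < C⁻¹ := inv_pos.mpr hC0
  have hy₁n : ‖y₁‖ ≤ 1 := by
    rw [hy₁def, norm_smul, Real.norm_eq_abs, abs_of_pos hCinv]
    calc C⁻¹ * ‖x + (3⁻¹ : ℝ) • w‖ ≤ C⁻¹ * C := mul_le_mul_of_nonneg_left hu1 hCinv.le
      _ = 1 := inv_mul_cancel₀ hC0.ne'
  have hy₂n : ‖y₂‖ ≤ 1 := by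
    rw [hy₂def, norm_smul, Real.norm_eq_abs, abs_of_pos hCinv]
    calc C⁻¹ * ‖x + (-3⁻¹ : ℝ) • w‖ ≤ C⁻¹ * C := mul_le_mul_of_nonneg_left hu2 hCinv.le
      _ = 1 := inv_mul_cancel₀ hC0.ne'
  set d : X := (C⁻¹ * (2 / 3)) • w with hddef
  have hyd : y₁ - y₂ = d := by
    rw [hy₁def, hy₂def, hddef]
    module
  have hd_norm : C⁻¹ * (2 / 3) ≤ ‖d‖ := by
    rw [hddef, norm_smul, Real.norm_eq_abs,
      abs_of_pos (by positivity : (0:ℝ) < C⁻¹ * (2 / 3))]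
    nlinarith [hw_norm]
  have hd0 : d ≠ 0 := by
    intro hcon
    rw [hcon, norm_zero] at hd_norm
    nlinarith
  obtain ⟨g, hg1, hgd⟩ := exists_dual_vector ℝ d (norm_ne_zero_iff.mpr hd0)
  refine ⟨(δ / 2) • g, ?_, ?_, ?_⟩
  · rw [norm_smul, Real.norm_eq_abs, abs_of_pos ht, hg1, mul_one]
    exact ht
  · rw [norm_smul, Real.norm_eq_abs, abs_of_pos ht, hg1, mul_one]
    linarith
  · set h : StrongDual ℝ X := (δ / 2) • g with hhdef
    have hhn : ‖h‖ = δ / 2 := by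
      rw [hhdef, norm_smul, Real.norm_eq_abs, abs_of_pos ht, hg1, mul_one]
    -- lower bounds for the two norms
    have hA1 : f y₁ + h y₁ ≤ ‖f + h‖ := by
      have h2 := (f + h).le_opNorm y₁
      rw [Real.norm_eq_abs] at h2
      have h3 : (f + h) y₁ = f y₁ + h y₁ := rfl
      have h4 : ‖f + h‖ * ‖y₁‖ ≤ ‖f + h‖ * 1 :=
        mul_le_mul_of_nonneg_left hy₁n (norm_nonneg _)
      calc f y₁ + h y₁ ≤ |f y₁ + h y₁| := le_abs_self _
        _ = |(f + h) y₁| := by rw [h3]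
        _ ≤ ‖f + h‖ * ‖y₁‖ := h2
        _ ≤ ‖f + h‖ := by linarith
    have hA2 : f y₂ - h y₂ ≤ ‖f - h‖ := by
      have h2 := (f - h).le_opNorm y₂
      rw [Real.norm_eq_abs] at h2
      have h3 : (f - h) y₂ = f y₂ - h y₂ := rfl
      have h4 : ‖f - h‖ * ‖y₂‖ ≤ ‖f - h‖ * 1 :=
        mul_le_mul_of_nonneg_left hy₂n (norm_nonneg _)
      calc f y₂ - h y₂ ≤ |f y₂ - h y₂| := le_abs_self _
        _ = |(f - h) y₂| := by rw [h3]
        _ ≤ ‖f - h‖ * ‖y₂‖ := h2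
        _ ≤ ‖f - h‖ := by linarith
    have hsum_f : f y₁ + f y₂ = C⁻¹ * (2 * f x) := by
      rw [hy₁def, hy₂def]
      simp only [map_smul, map_add, smul_eq_mul]
      ring
    have hg_diff : h y₁ - h y₂ = (δ / 2) * ‖d‖ := by
      have h2 : h y₁ - h y₂ = h (y₁ - y₂) := by rw [map_sub]
      rw [h2, hyd, hhdef]
      have h3 : ((δ / 2) • g) d = (δ / 2) * g d := rfl
      rw [h3, hgd]
      norm_cast
    have key : C⁻¹ * (2 * f x) + (δ / 2) * ‖d‖ ≤ ‖f + h‖ + ‖f - h‖ := by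
      linarith [hA1, hA2, hsum_f, hg_diff]
    -- final numeric estimate
    have e1 : 2 - 6 * η ≤ C⁻¹ * (2 * f x) := by
      rw [inv_mul_eq_div, le_div_iff₀ hC0]
      nlinarith [hfx, hη0]
    have e2 : 2 / 3 - 4 * η / 3 ≤ C⁻¹ * (2 / 3) := by
      rw [inv_mul_eq_div, le_div_iff₀ hC0]
      nlinarith [sq_nonneg η]
    have e3 : (δ / 2) * (2 / 3 - 4 * η / 3) ≤ (δ / 2) * ‖d‖ :=
      mul_le_mul_of_nonneg_left (le_trans e2 hd_norm) ht.le
    rw [hhn, hf, gt_iff_lt, lt_div_iff₀ ht]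
    nlinarith [key, e1, e3, mul_pos hε ht, hηδ, hηε, hη0,
      mul_le_mul_of_nonneg_right hηε ht.le]
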